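/- Let κ ≤ λ ≤ 𝔠 be uncountable cardinals, let P be the set of irrational numbers in [0,1], and let E ⊆ P be a set of cardinality λ such that |E ∩ K| < κ for every compact set K ⊆ P. Let Y be a Polish space which is not σ-compact and let h : P → Y be a homeomorphic embedding of P onto a closed subset of Y. Then for every complete metric d on Y compatible with its topology and every subset A ⊆ E of cardinality κ, the restriction of h to A is not uniformly continuous with respect to d. -/

import Mathlib

open Cardinal

/-- The set of irrational numbers in the unit interval `[0,1]`. -/
def IrrP : Set ℝ := {x | x ∈ Set.Icc (0 : ℝ) 1 ∧ Irrational x}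

/-- Any `κ`-K-Lusin set `E` of cardinality `lam` in the irrationals `P` of `[0,1]` witnesses,
via any closed embedding `h` of `P` into a non-σ-compact Polish space `Y`, that `h` is not
uniformly continuous (for any compatible complete metric on `Y`) on any subset of `E`
of cardinality `κ`. -/
theorem stmt_2 (κ lam : Cardinal.{0}) (hκ : aleph 0 < κ) (hkl : κ ≤ lam)
    (hlc : lam ≤ continuum)
    (E : Set IrrP) (hE : #E = lam)
    (hLusin : ∀ K : Set IrrP, IsCompact K → #(↥(E ∩ K)) < κ)
    (Y : Type) (tY : TopologicalSpace Y) (hPolish : @PolishSpace Y tY)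
    (hNotSigma : ¬ @SigmaCompactSpace Y tY)
    (h : IrrP → Y) (hemb : @Topology.IsClosedEmbedding _ _ _ tY h) :
    ∀ m : MetricSpace Y, m.toUniformSpace.toTopologicalSpace = tY →
      @CompleteSpace Y m.toUniformSpace →
      ∀ A : Set IrrP, A ⊆ E → #A = κ →
        ¬ @UniformContinuousOn _ _ _ m.toUniformSpace h A := by
  intro m htop hcomp A hAE hA hUC
  subst htop
  -- A is totally bounded in IrrP
  have hTBval : TotallyBounded (Subtype.val '' A : Set ℝ) := by
    refine TotallyBounded.subset ?_ (isCompact_Icc (a := (0:ℝ)) (b := 1)).totallyBounded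
    rintro x ⟨⟨y, hy1, hy2⟩, hyA, rfl⟩; exact hy1
  have hTBA : TotallyBounded A :=
    (totallyBounded_image_iff (isometry_subtype_coe (s := IrrP)).isUniformInducing).mp hTBval
  have hTBu : TotallyBounded (Set.univ : Set ↥A) := by
    refine (totallyBounded_image_iff
      (isometry_subtype_coe (s := A)).isUniformInducing).mp ?_
    rwa [Set.image_univ, Subtype.range_val]
  have hUC' : UniformContinuous (A.restrict h) := uniformContinuousOn_iff_restrict.mp hUC
  have hTBim : TotallyBounded (h '' A) := by
    have := hTBu.image hUC'
    rw [Set.image_univ] at this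
    rw [Set.image_eq_range]; exact this
  have hC : IsCompact (closure (h '' A)) :=
    TotallyBounded.isCompact_of_isClosed hTBim.closure isClosed_closure
  -- pull back
  have hK : IsCompact (h ⁻¹' (closure (h '' A))) := hemb.isCompact_preimage hC
  have hsub : A ⊆ E ∩ (h ⁻¹' (closure (h '' A))) := by
    intro x hx
    exact ⟨hAE hx, subset_closure (Set.mem_image_of_mem h hx)⟩
  have := (Cardinal.mk_le_mk_of_subset hsub).trans_lt (hLusin _ hK)
  rw [hA] at this
  exact lt_irrefl _ this
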